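/- In the selectWinner elimination game: if in each round every surviving process independently flips a fair bit and the adversary eliminates all processes holding the minority bit value (keeping the majority, breaking ties adversarially but eliminating at least the minority when both values occur), then whenever k ≥ 2 processes survive, the probability that at least ⌈k/4⌉ processes are eliminated in the round is at least 1/4. -/

import Mathlib

open Finset

/-- For `i ≠ j`, the ±1 indicators at coordinates `i` and `j` are uncorrelated:
the sum of their product over all `2^k` outcomes vanishes. -/
lemma selectWinner_offdiag_sum (k : ℕ) (i j : Fin k) (hij : i ≠ j) :
    ∑ f : Fin k → Bool, ((if f i then (1:ℤ) else -1) * (if f j then (1:ℤ) else -1)) = 0 := by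
  refine Finset.sum_involution (fun f _ => Function.update f i (!(f i))) ?_ ?_
    (fun f _ => Finset.mem_univ _) ?_
  · intro f _
    have h1 : Function.update f i (!(f i)) i = !(f i) := Function.update_self _ _ _
    have h2 : Function.update f i (!(f i)) j = f j := Function.update_of_ne hij.symm _ _
    simp only [h1, h2]
    cases f i <;> cases f j <;> simp
  · intro f _ _ h
    have := congrFun h i
    simp only [Function.update_self] at this
    exact (Bool.not_ne_self (f i)) this
  · intro f _
    funext x
    rcases eq_or_ne x i with rfl | hx
    · simp [Function.update_self]
    · simp [Function.update_of_ne hx]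

/-- Second moment of the ±1 random walk: `∑_f (∑_i ±1)² = k·2^k`. -/
lemma selectWinner_second_moment (k : ℕ) :
    ∑ f : Fin k → Bool, (∑ i, (if f i then (1:ℤ) else -1))^2 = k * 2^k := by
  have expand : ∀ f : Fin k → Bool, (∑ i, (if f i then (1:ℤ) else -1))^2
      = ∑ i, ∑ j, (if f i then (1:ℤ) else -1) * (if f j then (1:ℤ) else -1) := by
    intro f
    rw [sq, Finset.sum_mul_sum]
  simp_rw [expand]
  rw [Finset.sum_comm]
  have : ∀ i : Fin k, ∑ f : Fin k → Bool, ∑ j, (if f i then (1:ℤ) else -1) * (if f j then (1:ℤ) else -1)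
      = 2^k := by
    intro i
    rw [Finset.sum_comm]
    have hterm : ∀ j : Fin k, ∑ f : Fin k → Bool,
        (if f i then (1:ℤ) else -1) * (if f j then (1:ℤ) else -1)
        = if j = i then 2^k else 0 := by
      intro j
      rcases eq_or_ne j i with rfl | hj
      · simp only [if_pos rfl]
        have : ∀ f : Fin k → Bool, (if f j then (1:ℤ) else -1) * (if f j then (1:ℤ) else -1) = 1 := by
          intro f; cases f j <;> norm_num
        simp_rw [this]
        simp [Finset.card_univ]
      · rw [if_neg hj]
        exact selectWinner_offdiag_sum k i j (Ne.symm hj)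
    simp_rw [hterm]
    simp
  simp_rw [this]
  simp [mul_comm]

lemma selectWinner_zo_card (k : ℕ) (f : Fin k → Bool) :
    (Finset.univ.filter fun i => f i = false).card
      + (Finset.univ.filter fun i => f i = true).card = k := by
  have := Finset.card_filter_add_card_filter_not
    (s := (Finset.univ : Finset (Fin k))) (p := fun i => f i = false)
  simpa [Finset.card_univ] using this

lemma selectWinner_diff_eq_sum (k : ℕ) (f : Fin k → Bool) :
    ((Finset.univ.filter fun i => f i = true).card : ℤ)
      - ((Finset.univ.filter fun i => f i = false).card : ℤ)
      = ∑ i, (if f i then (1:ℤ) else -1) := by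
  rw [Finset.card_filter, Finset.card_filter]
  push_cast
  rw [← Finset.sum_sub_distrib]
  apply Finset.sum_congr rfl
  intro i _
  cases f i <;> simp

/-- In the selectWinner elimination game with `k ≥ 2` surviving processes, each flipping an
independent fair bit, the probability that the minority bit value is held by at least `k/4`
of the processes (so at least `⌈k/4⌉` processes get eliminated) is at least `1/4`.
The probability is the counting fraction over the `2^k` equally likely outcomes. -/
theorem selectWinner_successful_round_prob (k : ℕ) (hk : 2 ≤ k) :
    (1 / 4 : ℝ) ≤
      ((Finset.univ.filter fun f : Fin k → Bool =>
          k ≤ 4 * min (Finset.univ.filter fun i => f i = false).card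
                      (Finset.univ.filter fun i => f i = true).card).card : ℝ) / 2 ^ k := by
  set p : (Fin k → Bool) → Prop := fun f =>
    k ≤ 4 * min (Finset.univ.filter fun i => f i = false).card
                (Finset.univ.filter fun i => f i = true).card with hp
  -- reduce to a Nat inequality: 2^k ≤ 4 * (success count)
  have key : 2^k ≤ 4 * (Finset.univ.filter p).card := by
    rcases eq_or_lt_of_le hk with rfl | hk3
    · -- k = 2
      have : (Finset.univ.filter p).card = 2 := by decide
      rw [this]; norm_num
    · -- k ≥ 3
      have hk3 : 3 ≤ k := hk3
      set F := Finset.univ.filter (fun f => ¬ p f) with hF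
      have hpart : (Finset.univ.filter p).card + F.card = 2^k := by
        rw [hF, Finset.card_filter_add_card_filter_not, Finset.card_univ]
        simp
      -- each failure contributes at least (k+1)²/4 to the second moment
      have hfail : ∀ f ∈ F, ((k:ℤ)+1)^2 ≤ 4 * (∑ i, (if f i then (1:ℤ) else -1))^2 := by
        intro f hf
        rw [hF, Finset.mem_filter] at hf
        have hnp := hf.2
        rw [hp] at hnp
        push_neg at hnp
        set z := (Finset.univ.filter fun i => f i = false).card
        set o := (Finset.univ.filter fun i => f i = true).card
        have hzo : z + o = k := selectWinner_zo_card k f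
        have hd := selectWinner_diff_eq_sum k f
        rw [← hd]
        have hlt : 4 * min z o < k := hnp
        rcases le_total z o with h | h
        · have h2 : k + 1 ≤ 2 * (o - z) := by
            rw [min_eq_left h] at hlt; omega
          have h2' : (k:ℤ) + 1 ≤ 2 * ((o:ℤ) - (z:ℤ)) := by
            have hz : (z:ℤ) ≤ o := by exact_mod_cast h
            omega
          nlinarith [sq_nonneg ((o:ℤ) - (z:ℤ))]
        · have h2 : k + 1 ≤ 2 * (z - o) := by
            rw [min_eq_right h] at hlt; omega
          have h2' : (k:ℤ) + 1 ≤ 2 * ((z:ℤ) - (o:ℤ)) := by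
            have hz : (o:ℤ) ≤ z := by exact_mod_cast h
            omega
          nlinarith [sq_nonneg ((z:ℤ) - (o:ℤ))]
      -- sum over F
      have hFbound : (F.card : ℤ) * ((k:ℤ)+1)^2 ≤ 4 * (k * 2^k) := by
        calc (F.card : ℤ) * ((k:ℤ)+1)^2
            = ∑ _f ∈ F, ((k:ℤ)+1)^2 := by rw [Finset.sum_const, nsmul_eq_mul]
          _ ≤ ∑ f ∈ F, 4 * (∑ i, (if f i then (1:ℤ) else -1))^2 :=
              Finset.sum_le_sum hfail
          _ ≤ ∑ f : Fin k → Bool, 4 * (∑ i, (if f i then (1:ℤ) else -1))^2 := by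
              apply Finset.sum_le_sum_of_subset_of_nonneg (Finset.filter_subset _ _)
              intro f _ _
              positivity
          _ = 4 * (k * 2^k) := by rw [← Finset.mul_sum, selectWinner_second_moment k]
      -- 16k ≤ 3(k+1)² for k ≥ 3
      have harith : 16 * (k:ℤ) ≤ 3 * ((k:ℤ)+1)^2 := by
        have : (3:ℤ) ≤ k := by exact_mod_cast hk3
        nlinarith
      -- conclude 4 * F.card ≤ 3 * 2^k
      have hF3 : 4 * (F.card : ℤ) ≤ 3 * 2^k := by
        have hpos : (0:ℤ) < ((k:ℤ)+1)^2 := by positivity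
        have h2pos : (0:ℤ) ≤ (2:ℤ)^k := by positivity
        nlinarith
      have hF3' : 4 * F.card ≤ 3 * 2^k := by exact_mod_cast hF3
      omega
  -- finish: real arithmetic
  have h2 : (0:ℝ) < 2^k := by positivity
  rw [le_div_iff₀ h2]
  have : (2:ℝ)^k ≤ 4 * ((Finset.univ.filter p).card : ℝ) := by exact_mod_cast key
  linarith
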